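/- Every subset B of the Cantor space 2^ℕ which has the Baire property and is E₀-invariant (i.e., is a union of E₀-classes) is either meager or comeager. -/

import Mathlib

/-- `E₀`: eventual equality on Cantor space. -/
def E0 (x y : ℕ → Bool) : Prop := ∃ N : ℕ, ∀ n ≥ N, x n = y n

/-- xor-translation by `c` as a homeomorphism of Cantor space. -/
def xorHomeo (c : ℕ → Bool) : (ℕ → Bool) ≃ₜ (ℕ → Bool) where
  toFun x := fun n => xor (c n) (x n)
  invFun x := fun n => xor (c n) (x n)
  left_inv x := funext fun n => by cases c n <;> simp
  right_inv x := funext fun n => by cases c n <;> simp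
  continuous_toFun := continuous_pi fun n =>
    Continuous.comp (g := fun b => xor (c n) b) continuous_of_discreteTopology
      (continuous_apply n)
  continuous_invFun := continuous_pi fun n =>
    Continuous.comp (g := fun b => xor (c n) b) continuous_of_discreteTopology
      (continuous_apply n)

lemma isMeagre_iUnion' {X : Type*} [TopologicalSpace X] {ι : Type*} [Countable ι]
    {s : ι → Set X} (hs : ∀ i, IsMeagre (s i)) : IsMeagre (⋃ i, s i) := by
  rw [IsMeagre, Set.compl_iUnion]
  exact countable_iInter_mem.mpr hs

/-- every E₀-invariant subset of Cantor space with the Baire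
property is meager or comeager. -/
theorem stmt_1 (B : Set (ℕ → Bool))
    (hBP : ∃ U : Set (ℕ → Bool), IsOpen U ∧ IsMeagre (symmDiff B U))
    (hinv : ∀ x y : ℕ → Bool, E0 x y → (x ∈ B ↔ y ∈ B)) :
    IsMeagre B ∨ IsMeagre Bᶜ := by
  obtain ⟨U, hU, hmeag⟩ := hBP
  by_cases hm : IsMeagre B
  · exact Or.inl hm
  right
  -- U is nonempty
  have hUne : U.Nonempty := by
    rcases Set.eq_empty_or_nonempty U with h | h
    · exfalso
      apply hm
      refine hmeag.mono ?_
      intro y hy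
      simp [h, Set.mem_symmDiff]
      exact hy
    · exact h
  obtain ⟨x, hxU⟩ := hUne
  -- get a cylinder inside U
  obtain ⟨I, u, hIu, hsub⟩ := isOpen_pi_iff.mp hU x hxU
  set n : ℕ := I.sup id + 1 with hn
  have hIlt : ∀ i ∈ I, i < n := fun i hi =>
    Nat.lt_succ_of_le (Finset.le_sup (f := id) hi)
  set C : Set (ℕ → Bool) := {y | ∀ i < n, y i = x i} with hC
  have hCU : C ⊆ U := by
    intro y hy
    apply hsub
    intro i hi
    have := hy i (hIlt i hi)
    rw [this]
    exact (hIu i hi).2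
  -- B is comeager on C
  have hkey : IsMeagre (Bᶜ ∩ C) := by
    refine hmeag.mono ?_
    intro y ⟨hyB, hyC⟩
    rw [Set.mem_symmDiff]
    exact Or.inr ⟨hCU hyC, hyB⟩
  -- cover Bᶜ by cylinders of length n
  have hcover : Bᶜ ⊆ ⋃ t : Fin n → Bool,
      (Bᶜ ∩ {y | ∀ i : Fin n, y i = t i}) := by
    intro y hy
    exact Set.mem_iUnion.mpr ⟨fun i => y i, hy, fun i => rfl⟩
  refine IsMeagre.mono hcover (isMeagre_iUnion' fun t : Fin n → Bool => ?_)
  -- each piece is meager via the xor translation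
  set c : ℕ → Bool := fun i => if h : i < n then xor (t ⟨i, h⟩) (x i) else false with hc
  have hpre : (Bᶜ ∩ {y | ∀ i : Fin n, y i = t i}) ⊆ (xorHomeo c) ⁻¹' (Bᶜ ∩ C) := by
    intro y ⟨hyB, hyt⟩
    have hE0 : E0 y (xorHomeo c y) := by
      refine ⟨n, fun i hi => ?_⟩
      simp only [xorHomeo, Homeomorph.homeomorph_mk_coe, Equiv.coe_fn_mk, hc]
      rw [dif_neg (Nat.not_lt.mpr hi)]
      simp
    constructor
    · intro hmem
      exact hyB ((hinv y _ hE0).mpr hmem)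
    · intro i hi
      simp only [xorHomeo, Homeomorph.homeomorph_mk_coe, Equiv.coe_fn_mk, hc]
      rw [dif_pos hi]
      have := hyt ⟨i, hi⟩
      rw [this]
      cases t ⟨i, hi⟩ <;> cases x i <;> simp
  exact IsMeagre.mono hpre (hkey.preimage_of_isOpenMap (xorHomeo c).continuous
    (xorHomeo c).isOpenMap)
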